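/- If F is γ-strongly convex with minimizer w_* and F(w_*) = 0, and w' = w - η∇F_S(w) with ‖∇F_S(w)‖ ≤ GB, ∇F L-Lipschitz, and ‖∇F(w) - ∇F_S(w)‖² ≤ (C²G²B²/n²) + (2C²G²(log(1/δ)+d·log n)/(γn))·2F(w) pointwise, and n ≥ 4C²G²(log(1/δ)+d·log n)/γ², then F(w') - F(w) ≤ ηC²G²B²/n² - (ηγ/2)F(w) + η²G²B²L/2. -/

import Mathlib

open Real

/-- Per-step inequality in the proof of Theorem 6 (strongly convex case, after
the first epoch): if `F` is `γ`-strongly convex with minimizer `w_*`,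
`F(w_*) = 0`, `∇F` is `L`-Lipschitz, `w' = w - η∇F_S(w)` with
`‖∇F_S(w)‖ ≤ GB`, the gradient deviation at `w` satisfies
`‖∇F(w) - ∇F_S(w)‖² ≤ C²G²B²/n² + (2C²G²(log(1/δ) + d log n)/(γn))·2F(w)`,
and `n ≥ 4C²G²(log(1/δ) + d log n)/γ²`, then
`F(w') - F(w) ≤ ηC²G²B²/n² - (ηγ/2)F(w) + η²G²B²L/2`. -/
lemma descent_lemma {k : ℕ} (F : EuclideanSpace ℝ (Fin k) → ℝ) (L : ℝ) (hL : 0 ≤ L)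
    (hF : Differentiable ℝ F)
    (hLip : ∀ w u, ‖gradient F w - gradient F u‖ ≤ L * ‖w - u‖)
    (x y : EuclideanSpace ℝ (Fin k)) :
    F y ≤ F x + (inner ℝ (gradient F x) (y - x) : ℝ) + L / 2 * ‖y - x‖ ^ 2 := by
  set v := y - x with hv
  set a : ℝ := inner ℝ (gradient F x) v with ha
  set c : ℝ := L * ‖v‖ ^ 2 / 2 with hc
  set ψ : ℝ → ℝ := fun t => F (x + t • v) - t * a - t ^ 2 * c with hψ
  have hderiv : ∀ t : ℝ, HasDerivAt ψ
      ((inner ℝ (gradient F (x + t • v)) v : ℝ) - a - 2 * t * c) t := by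
    intro t
    have h1 : HasDerivAt (fun t : ℝ => x + t • v) v t := by
      simpa using ((hasDerivAt_id t).smul_const v).const_add x
    have h2 : HasFDerivAt F (InnerProductSpace.toDual ℝ _ (gradient F (x + t • v)))
        (x + t • v) := (hF _).hasGradientAt.hasFDerivAt
    have h3 : HasDerivAt (fun t : ℝ => F (x + t • v))
        ((inner ℝ (gradient F (x + t • v)) v : ℝ)) t := by
      exact h2.comp_hasDerivAt t h1
    have h4 : HasDerivAt (fun t : ℝ => t * a) a t := by
      simpa using (hasDerivAt_id t).mul_const a
    have h5 : HasDerivAt (fun t : ℝ => t ^ 2 * c) (2 * t * c) t := by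
      simpa [mul_comm] using (hasDerivAt_pow 2 t).mul_const c
    exact (h3.sub h4).sub h5
  have hmono : AntitoneOn ψ (Set.Icc (0:ℝ) 1) := by
    apply antitoneOn_of_deriv_nonpos (convex_Icc 0 1)
    · exact fun t _ => ((hderiv t).differentiableAt).continuousAt.continuousWithinAt
    · intro t ht
      exact ((hderiv t).differentiableAt).differentiableWithinAt
    · intro t ht
      rw [interior_Icc] at ht
      rw [(hderiv t).deriv]
      have key : (inner ℝ (gradient F (x + t • v)) v : ℝ) - a
          = (inner ℝ (gradient F (x + t • v) - gradient F x) v : ℝ) := by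
        rw [inner_sub_left]
      have hb : (inner ℝ (gradient F (x + t • v) - gradient F x) v : ℝ)
          ≤ L * t * ‖v‖ ^ 2 := by
        calc _ ≤ ‖gradient F (x + t • v) - gradient F x‖ * ‖v‖ :=
              real_inner_le_norm _ _
          _ ≤ (L * ‖(x + t • v) - x‖) * ‖v‖ :=
              mul_le_mul_of_nonneg_right (hLip _ _) (norm_nonneg _)
          _ = L * t * ‖v‖ ^ 2 := by
              rw [show (x + t • v) - x = t • v by abel, norm_smul]
              simp [abs_of_pos ht.1]; ring
      have : 2 * t * c = L * t * ‖v‖ ^ 2 := by rw [hc]; ring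
      linarith [key ▸ hb]
  have h01 : ψ 1 ≤ ψ 0 := hmono (by norm_num) (by norm_num) zero_le_one
  have e0 : ψ 0 = F x := by simp [hψ]
  have e1 : ψ 1 = F y - a - c := by simp [hψ, hv]
  rw [e0, e1] at h01
  have : c = L / 2 * ‖v‖ ^ 2 := by rw [hc]; ring
  linarith [this ▸ h01]
set_option maxHeartbeats 1000000 in
theorem per_step_strongly_convex {k : ℕ}
    (F FS : EuclideanSpace ℝ (Fin k) → ℝ)
    (γ L C G B η δ : ℝ) (n d : ℕ)
    (hγ : 0 < γ) (hL : 0 < L) (hC : 0 < C) (hG : 0 < G) (hB : 0 < B)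
    (hη : 0 < η) (hδ0 : 0 < δ) (hδ1 : δ < 1) (hn : 0 < n) (hd : 0 < d)
    (hF : Differentiable ℝ F)
    (hSC : ∀ w u, F w - F u ≥ (inner ℝ (gradient F u) (w - u) : ℝ) + γ / 2 * ‖w - u‖ ^ 2)
    (wstar : EuclideanSpace ℝ (Fin k)) (hmin : ∀ w, F wstar ≤ F w)
    (hzero : F wstar = 0)
    (hLip : ∀ w u, ‖gradient F w - gradient F u‖ ≤ L * ‖w - u‖)
    (w : EuclideanSpace ℝ (Fin k))
    (hFSb : ‖gradient FS w‖ ≤ G * B)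
    (hdev : ‖gradient F w - gradient FS w‖ ^ 2
      ≤ C ^ 2 * G ^ 2 * B ^ 2 / (n : ℝ) ^ 2
        + 2 * C ^ 2 * G ^ 2 * (Real.log (1 / δ) + (d : ℝ) * Real.log n) / (γ * n)
          * (2 * F w))
    (hnbig : (n : ℝ) ≥ 4 * C ^ 2 * G ^ 2 * (Real.log (1 / δ) + (d : ℝ) * Real.log n) / γ ^ 2) :
    F (w - η • gradient FS w) - F w
      ≤ η * C ^ 2 * G ^ 2 * B ^ 2 / (n : ℝ) ^ 2 - η * γ / 2 * F w
        + η ^ 2 * G ^ 2 * B ^ 2 * L / 2 := by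
  set g := gradient FS w with hg
  set gF := gradient F w with hgF
  set K : ℝ := Real.log (1 / δ) + (d : ℝ) * Real.log n with hK
  clear_value K
  clear_value g
  clear_value gF
  have hnpos : (0:ℝ) < (n:ℝ) := by exact_mod_cast hn
  have hFw0 : 0 ≤ F w := hzero ▸ hmin w
  -- PL inequality: ‖gF‖² ≥ 2γ F w
  have hPL : 2 * γ * F w ≤ ‖gF‖ ^ 2 := by
    have h1 := hSC wstar w
    rw [hzero, ← hgF] at h1
    set u := wstar - w with hu
    have h2 : (0:ℝ) ≤ ‖γ • u + gF‖ ^ 2 := sq_nonneg _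
    rw [norm_add_sq_real] at h2
    have e1 : (inner ℝ (γ • u) gF : ℝ) = γ * inner ℝ gF u := by
      rw [real_inner_smul_left, real_inner_comm]
    have e2 : ‖γ • u‖ ^ 2 = γ ^ 2 * ‖u‖ ^ 2 := by
      rw [norm_smul, Real.norm_eq_abs, mul_pow, sq_abs]
    rw [e1, e2] at h2
    have h1' : γ * 2 * ((inner ℝ gF u : ℝ) + γ / 2 * ‖u‖ ^ 2) ≤ γ * 2 * (0 - F w) :=
      mul_le_mul_of_nonneg_left (by linarith) (by positivity)
    nlinarith [h2, h1']
  -- descent lemma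
  have hdes := descent_lemma F L hL.le hF hLip w (w - η • g)
  have hy : (w - η • g) - w = -(η • g) := by abel
  rw [hy, ← hgF] at hdes
  have ein : (inner ℝ gF (-(η • g)) : ℝ) = -η * inner ℝ gF g := by
    rw [inner_neg_right, real_inner_smul_right]; ring
  have enorm : ‖-(η • g)‖ ^ 2 = η ^ 2 * ‖g‖ ^ 2 := by
    rw [norm_neg, norm_smul, Real.norm_eq_abs, mul_pow, sq_abs]
  rw [ein, enorm] at hdes
  -- Cauchy-Schwarz / AM-GM: -η⟨gF,g⟩ ≤ -η/2‖gF‖² + η/2‖gF-g‖²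
  have hCS : -η * (inner ℝ gF g : ℝ) ≤ -η / 2 * ‖gF‖ ^ 2 + η / 2 * ‖gF - g‖ ^ 2 := by
    have e : ‖gF - g‖ ^ 2 = ‖gF‖ ^ 2 - 2 * inner ℝ gF g + ‖g‖ ^ 2 := norm_sub_sq_real gF g
    have e2 : -η / 2 * ‖gF‖ ^ 2 + η / 2 * ‖gF - g‖ ^ 2
        = -η * (inner ℝ gF g : ℝ) + η / 2 * ‖g‖ ^ 2 := by rw [e]; ring
    have e3 : 0 ≤ η / 2 * ‖g‖ ^ 2 := by positivity
    linarith
  -- bound on ‖g‖²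
  have hg2 : ‖g‖ ^ 2 ≤ G ^ 2 * B ^ 2 := by
    simpa [mul_pow] using pow_le_pow_left₀ (norm_nonneg g) hFSb 2
  -- key term bound
  have hkey : 2 * C ^ 2 * G ^ 2 * K / (γ * (n:ℝ)) * (2 * F w) ≤ γ * F w := by
    rcases le_or_gt K 0 with hK0 | hK0
    · have h1 : 2 * C ^ 2 * G ^ 2 * K / (γ * (n:ℝ)) ≤ 0 := by
        apply div_nonpos_of_nonpos_of_nonneg
        · nlinarith [sq_nonneg (C*G)]
        · positivity
      have h2 : 2 * C ^ 2 * G ^ 2 * K / (γ * (n:ℝ)) * (2 * F w) ≤ 0 :=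
        mul_nonpos_of_nonpos_of_nonneg h1 (by linarith)
      have h3 : 0 ≤ γ * F w := mul_nonneg hγ.le hFw0
      linarith only [h2, h3]
    · have h1 : 4 * C ^ 2 * G ^ 2 * K ≤ γ ^ 2 * (n:ℝ) := by
        have := (div_le_iff₀ (by positivity : (0:ℝ) < γ ^ 2)).mp hnbig
        linarith only [this]
      have h2 : 2 * C ^ 2 * G ^ 2 * K / (γ * (n:ℝ)) ≤ γ / 2 := by
        rw [div_le_iff₀ (by positivity)]
        nlinarith [h1]
      have h3 := mul_le_mul_of_nonneg_right h2 (by linarith : (0:ℝ) ≤ 2 * F w)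
      linarith only [h3]
  have hquot : 0 ≤ C ^ 2 * G ^ 2 * B ^ 2 / (n:ℝ) ^ 2 := by positivity
  -- staged final combination
  have t1 : L / 2 * (η ^ 2 * ‖g‖ ^ 2) ≤ η ^ 2 * G ^ 2 * B ^ 2 * L / 2 := by
    have := mul_le_mul_of_nonneg_left hg2 (by positivity : (0:ℝ) ≤ L / 2 * η ^ 2)
    linarith only [this]
  have hdev2 : ‖gF - g‖ ^ 2 ≤ C ^ 2 * G ^ 2 * B ^ 2 / (n:ℝ) ^ 2 + γ * F w :=
    le_trans hdev (by linarith only [hkey])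
  have t2 : η / 2 * ‖gF - g‖ ^ 2
      ≤ η / 2 * (C ^ 2 * G ^ 2 * B ^ 2 / (n:ℝ) ^ 2) + η / 2 * (γ * F w) := by
    have := mul_le_mul_of_nonneg_left hdev2 (by positivity : (0:ℝ) ≤ η / 2)
    linarith only [this]
  have t3 : -η / 2 * ‖gF‖ ^ 2 ≤ -(η * γ * F w) := by
    have := mul_le_mul_of_nonneg_left hPL (by positivity : (0:ℝ) ≤ η / 2)
    linarith only [this]
  have t4 : η / 2 * (C ^ 2 * G ^ 2 * B ^ 2 / (n:ℝ) ^ 2)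
      ≤ η * (C ^ 2 * G ^ 2 * B ^ 2 / (n:ℝ) ^ 2) :=
    mul_le_mul_of_nonneg_right (by linarith only [hη]) hquot
  obtain ⟨Q, hQ⟩ : ∃ Q, Q = C ^ 2 * G ^ 2 * B ^ 2 / (n:ℝ) ^ 2 := ⟨_, rfl⟩
  rw [← hQ] at t2 t4
  have tgt : η * C ^ 2 * G ^ 2 * B ^ 2 / (n:ℝ) ^ 2 = η * Q := by rw [hQ]; ring
  rw [tgt]
  linarith only [hdes, hCS, t1, t2, t3, t4]
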